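/- Let F⊂ℝ be compact with Lebesgue measure zero, fractal string (l_j), D∈(0,1) and L>0. If l_j ~ L j^{−1/D} as j→∞, then the S-content 𝓢^D(F) exists and equals 2^{1−D} L^D / (κ_{1−D}(1−D)). -/

import Mathlib

open Filter Set Topology MeasureTheory Metric ENNReal

/-- `κ_t = π^{t/2} / Γ(1 + t/2)`. -/
noncomputable def kappa (t : ℝ) : ℝ := Real.pi ^ (t / 2) / Real.Gamma (1 + t / 2)

/-- `(l_j)` is the fractal string of the compact set `F ⊂ ℝ`: a non-increasing sequence of
positive lengths of the (pairwise disjoint) bounded complementary open intervals of `F`. -/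
def IsFractalString (F : Set ℝ) (l : ℕ → ℝ) : Prop :=
  Antitone l ∧ (∀ j, 0 < l j) ∧
  ∃ a b : ℕ → ℝ,
    Pairwise (Function.onFun Disjoint fun j => Set.Ioo (a j) (b j)) ∧
    (∀ j, a j < b j ∧ b j - a j = l j) ∧
    (convexHull ℝ F) \ F = ⋃ j, Set.Ioo (a j) (b j)

/-- Lower S-content of `F ⊂ ℝ`: `liminf_{r→0} 𝓗⁰(∂F_r)/((1−D)κ_{1−D} r^{−D})`. -/
noncomputable def lowerSContent (F : Set ℝ) (D : ℝ) : ℝ≥0∞ :=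
  Filter.liminf
    (fun r : ℝ => μH[(0 : ℝ)] (frontier (cthickening r F)) /
      ENNReal.ofReal ((1 - D) * kappa (1 - D) * r ^ (-D)))
    (𝓝[>] (0 : ℝ))

/-- Upper S-content of `F ⊂ ℝ`. -/
noncomputable def upperSContent (F : Set ℝ) (D : ℝ) : ℝ≥0∞ :=
  Filter.limsup
    (fun r : ℝ => μH[(0 : ℝ)] (frontier (cthickening r F)) /
      ENNReal.ofReal ((1 - D) * kappa (1 - D) * r ^ (-D)))
    (𝓝[>] (0 : ℝ))

lemma hausdorff0_finset (s : Finset ℝ) : μH[(0:ℝ)] (s : Set ℝ) = s.card := by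
  classical
  induction s using Finset.induction_on with
  | empty => simp
  | @insert a t ha ih =>
    rw [Finset.coe_insert, Set.insert_eq,
      measure_union (by simpa using ha) (t.finite_toSet.measurableSet),
      MeasureTheory.Measure.hausdorffMeasure_zero_singleton, ih,
      Finset.card_insert_of_notMem ha]
    push_cast
    ring

lemma frontier_thickening_eq (F : Set ℝ) (hF : IsCompact F) (l a b : ℕ → ℝ)
    (hmono : Antitone l) (hpos : ∀ j, 0 < l j)
    (hdisj : Pairwise (Function.onFun Disjoint fun j => Set.Ioo (a j) (b j)))
    (hab : ∀ j, a j < b j ∧ b j - a j = l j)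
    (hgap : (convexHull ℝ F) \ F = ⋃ j, Set.Ioo (a j) (b j))
    (r : ℝ) (hr : 0 < r) (n : ℕ)
    (hn1 : l n ≤ 2*r) (hn2 : ∀ j < n, 2*r < l j) :
    μH[(0:ℝ)] (frontier (cthickening r F)) = ((2 + 2*n : ℕ) : ℝ≥0∞) := by
  classical
  -- F is nonempty
  have hFne : F.Nonempty := by
    by_contra h
    rw [not_nonempty_iff_eq_empty] at h
    subst h
    rw [convexHull_empty, empty_diff] at hgap
    have := (hab 0).1
    have h0 : Ioo (a 0) (b 0) = ∅ := by
      have := (Set.iUnion_eq_empty (s := fun j => Ioo (a j) (b j))).mp hgap.symm 0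
      exact this
    rw [Set.Ioo_eq_empty_iff] at h0
    exact h0 (hab 0).1
  set m := sInf F with hm
  set M := sSup F with hM
  have hmF : m ∈ F := hF.sInf_mem hFne
  have hMF : M ∈ F := hF.sSup_mem hFne
  have hle : ∀ x ∈ F, m ≤ x := fun x hx => csInf_le hF.bddBelow hx
  have hge : ∀ x ∈ F, x ≤ M := fun x hx => le_csSup hF.bddAbove hx
  have hmM : m ≤ M := hle M hMF
  have hhull : convexHull ℝ F = Icc m M := by
    apply subset_antisymm
    · exact convexHull_min (fun x hx => ⟨hle x hx, hge x hx⟩) (convex_Icc m M)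
    · rw [← segment_eq_Icc hmM]
      exact segment_subset_convexHull hmF hMF
  rw [hhull] at hgap
  have hIoo : ∀ j, Ioo (a j) (b j) ⊆ Icc m M \ F := fun j => by
    rw [hgap]; exact subset_iUnion (fun j => Ioo (a j) (b j)) j
  have haM : ∀ j, m ≤ a j ∧ b j ≤ M := by
    intro j
    have hmem : ∀ x ∈ Ioo (a j) (b j), m ≤ x ∧ x ≤ M := fun x hx =>
      mem_Icc.mp (hIoo j hx).1
    constructor
    · by_contra hc
      push_neg at hc
      have h1 : a j < min m (b j) := lt_min hc (hab j).1
      have h2 := hmem ((a j + min m (b j))/2)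
        ⟨by linarith, by have := min_le_right m (b j); linarith⟩
      have := min_le_left m (b j)
      linarith [h2.1]
    · by_contra hc
      push_neg at hc
      have h1 : max M (a j) < b j := max_lt hc (hab j).1
      have h2 := hmem ((max M (a j) + b j)/2)
        ⟨by have := le_max_right M (a j); linarith, by linarith⟩
      have := le_max_left M (a j)
      linarith [h2.2]
  have hFd : ∀ j, ∀ y ∈ F, y ∉ Ioo (a j) (b j) := fun j y hy hmem =>
    (hIoo j hmem).2 hy
  -- endpoints belong to F
  have hendF : ∀ j, a j ∈ F ∧ b j ∈ F := by
    intro j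
    constructor
    · by_contra hc
      have hIcc : a j ∈ Icc m M := ⟨(haM j).1, le_trans (hab j).1.le (haM j).2⟩
      have : a j ∈ ⋃ i, Ioo (a i) (b i) := by rw [← hgap]; exact ⟨hIcc, hc⟩
      obtain ⟨i, hi⟩ := mem_iUnion.mp this
      have hij : i ≠ j := fun h => by subst h; exact lt_irrefl _ hi.1
      have hkey := hdisj hij
      have h1 : a j < min (b i) (b j) := lt_min hi.2 (hab j).1
      set y := (a j + min (b i) (b j))/2 with hy
      have hyi : y ∈ Ioo (a i) (b i) :=
        ⟨by have := hi.1; linarith, by have := min_le_left (b i) (b j); linarith⟩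
      have hyj : y ∈ Ioo (a j) (b j) :=
        ⟨by linarith, by have := min_le_right (b i) (b j); linarith⟩
      exact Set.disjoint_left.mp hkey hyi hyj
    · by_contra hc
      have hIcc : b j ∈ Icc m M := ⟨le_trans (haM j).1 (hab j).1.le, (haM j).2⟩
      have : b j ∈ ⋃ i, Ioo (a i) (b i) := by rw [← hgap]; exact ⟨hIcc, hc⟩
      obtain ⟨i, hi⟩ := mem_iUnion.mp this
      have hij : i ≠ j := fun h => by subst h; exact lt_irrefl _ hi.2
      have hkey := hdisj hij
      have h1 : max (a i) (a j) < b j := max_lt hi.1 (hab j).1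
      set y := (max (a i) (a j) + b j)/2 with hy
      have hyi : y ∈ Ioo (a i) (b i) :=
        ⟨by have := le_max_left (a i) (a j); linarith, by have := hi.2; linarith⟩
      have hyj : y ∈ Ioo (a j) (b j) :=
        ⟨by have := le_max_right (a i) (a j); linarith, by linarith⟩
      exact Set.disjoint_left.mp hkey hyi hyj
  -- injectivity of a and b
  have ainj : Function.Injective a := by
    intro i j h
    by_contra hij
    have hkey := hdisj hij
    have h1 : a i < min (b i) (b j) := lt_min (hab i).1 (h ▸ (hab j).1)
    set y := (a i + min (b i) (b j))/2 with hy
    have hyi : y ∈ Ioo (a i) (b i) :=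
      ⟨by linarith, by have := min_le_left (b i) (b j); linarith⟩
    have hyj : y ∈ Ioo (a j) (b j) :=
      ⟨by rw [← h]; linarith, by have := min_le_right (b i) (b j); linarith⟩
    exact Set.disjoint_left.mp hkey hyi hyj
  have binj : Function.Injective b := by
    intro i j h
    by_contra hij
    have hkey := hdisj hij
    have h1 : max (a i) (a j) < b i := max_lt (hab i).1 (h ▸ (hab j).1)
    set y := (max (a i) (a j) + b i)/2 with hy
    have hyi : y ∈ Ioo (a i) (b i) :=
      ⟨by have := le_max_left (a i) (a j); linarith, by linarith⟩
    have hyj : y ∈ Ioo (a j) (b j) :=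
      ⟨by have := le_max_right (a i) (a j); linarith, by rw [← h]; linarith⟩
    exact Set.disjoint_left.mp hkey hyi hyj
  -- key: a i + r ≠ b j - r for j < n
  have habr : ∀ i j, j < n → a i + r ≠ b j - r := by
    intro i j hjn h
    by_cases hij : i = j
    · subst hij
      have := (hab i).2
      have := hn2 i hjn
      linarith
    · have hlj := hn2 j hjn
      have hablj := (hab j).2
      have : a i ∈ Ioo (a j) (b j) := ⟨by linarith, by linarith⟩
      exact hFd j (a i) (hendF i).1 this
  -- the thickening identity
  have hmem : ∀ x : ℝ, x ∈ cthickening r F ↔ infDist x F ≤ r := by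
    intro x
    rw [mem_cthickening_iff,
      ENNReal.le_ofReal_iff_toReal_le (infEdist_ne_top hFne) hr.le]
    rfl
  have hthick : cthickening r F
      = Icc (m - r) (M + r) \ ⋃ j, Ioo (a j + r) (b j - r) := by
    ext x
    rw [hmem]
    constructor
    · intro hx
      obtain ⟨y, hyF, hyd⟩ := hF.exists_infDist_eq_dist hFne x
      rw [hyd, Real.dist_eq, abs_le] at hx
      have hym := hle y hyF
      have hyM := hge y hyF
      constructor
      · exact ⟨by linarith [hx.1], by linarith [hx.2]⟩
      · intro hmem2
        obtain ⟨j, hj⟩ := mem_iUnion.mp hmem2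
        exact hFd j y hyF ⟨by linarith [hj.1, hx.2], by linarith [hj.2, hx.1]⟩
    · rintro ⟨hxIcc, hxU⟩
      rw [mem_Icc] at hxIcc
      rw [mem_iUnion] at hxU
      push_neg at hxU
      by_cases hxm : x < m
      · calc infDist x F ≤ dist x m := infDist_le_dist_of_mem hmF
          _ ≤ r := by rw [Real.dist_eq, abs_le]; constructor <;> linarith [hxIcc.1]
      by_cases hxM : M < x
      · calc infDist x F ≤ dist x M := infDist_le_dist_of_mem hMF
          _ ≤ r := by rw [Real.dist_eq, abs_le]; constructor <;> linarith [hxIcc.2]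
      push_neg at hxm hxM
      by_cases hxF : x ∈ F
      · rw [infDist_zero_of_mem hxF]; exact hr.le
      · have : x ∈ ⋃ i, Ioo (a i) (b i) := by rw [← hgap]; exact ⟨⟨hxm, hxM⟩, hxF⟩
        obtain ⟨j, hj⟩ := mem_iUnion.mp this
        have hj' := hxU j
        rw [mem_Ioo, not_and_or, not_lt, not_lt] at hj'
        rcases hj' with h1 | h1
        · calc infDist x F ≤ dist x (a j) := infDist_le_dist_of_mem (hendF j).1
            _ ≤ r := by rw [Real.dist_eq, abs_le]; constructor <;> linarith [hj.1]
        · calc infDist x F ≤ dist x (b j) := infDist_le_dist_of_mem (hendF j).2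
            _ ≤ r := by rw [Real.dist_eq, abs_le]; constructor <;> linarith [hj.2]
  -- finite union form
  set U : Set ℝ := ⋃ j ∈ Finset.range n, Ioo (a j + r) (b j - r) with hUdef
  have hUeq : (⋃ j, Ioo (a j + r) (b j - r)) = U := by
    apply subset_antisymm
    · apply iUnion_subset
      intro j
      by_cases hj : j < n
      · intro x hx
        exact mem_biUnion (Finset.mem_range.mpr hj) hx
      · push_neg at hj
        have : l j ≤ 2*r := le_trans (hmono hj) hn1
        have hablj := (hab j).2
        rw [Set.Ioo_eq_empty (by intro h; linarith)]
        exact empty_subset _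
    · exact iUnion₂_subset fun j _ => subset_iUnion (fun j => Ioo (a j + r) (b j - r)) j
  rw [hUeq] at hthick
  have hUopen : IsOpen U := isOpen_biUnion fun _ _ => isOpen_Ioo
  have hmMlt : m < M := by
    have h0 := haM 0
    have := (hab 0).1
    linarith [h0.1, h0.2]
  -- S is disjoint from U and contained in Icc
  have hSsub : cthickening r F ⊆ Icc (m - r) (M + r) := by
    rw [hthick]; exact diff_subset
  have hUS : U ⊆ (cthickening r F)ᶜ := by
    rw [hthick]
    intro x hx hmem2
    exact hmem2.2 hx
  -- the candidate frontier (as a Finset)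
  set E : Finset ℝ := ({m - r, M + r} ∪ (Finset.range n).image (fun j => a j + r))
    ∪ (Finset.range n).image (fun j => b j - r) with hEdef
  have hfront : frontier (cthickening r F) = (E : Set ℝ) := by
    apply subset_antisymm
    · -- frontier ⊆ E
      rw [hthick, diff_eq]
      intro x hx
      have hsub := frontier_inter_subset (Icc (m - r) (M + r)) Uᶜ
      have hx2 := hsub hx
      have hfi : frontier (Icc (m - r) (M + r)) = {m - r, M + r} :=
        frontier_Icc (by linarith)
      have hclU : closure U = ⋃ j ∈ Finset.range n, Icc (a j + r) (b j - r) := by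
        rw [hUdef, (Finset.range n).closure_biUnion]
        apply iUnion₂_congr
        intro j hj
        have hlj := hn2 j (Finset.mem_range.mp hj)
        have hablj := (hab j).2
        exact closure_Ioo (by intro h; rw [← (hab j).2] at hlj; linarith)
      have hfU : frontier U ⊆ (E : Set ℝ) := by
        rw [frontier, hUopen.interior_eq, hclU]
        intro y hy
        obtain ⟨hy1, hy2⟩ := hy
        obtain ⟨j, hj, hyj⟩ := mem_iUnion₂.mp hy1
        have : y ∉ Ioo (a j + r) (b j - r) := fun h => hy2 (mem_biUnion hj h)
        have hy3 : y ∈ Icc (a j + r) (b j - r) \ Ioo (a j + r) (b j - r) := ⟨hyj, this⟩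
        rw [Icc_diff_Ioo_same (by
          have hlj := hn2 j (Finset.mem_range.mp hj)
          have := (hab j).2
          linarith)] at hy3
        simp only [hEdef, Finset.coe_union, Finset.coe_image, Finset.coe_insert,
          Finset.coe_singleton, Finset.coe_range, mem_union, mem_image, mem_insert_iff,
          mem_singleton_iff]
        rcases hy3 with h | h
        · exact Or.inl (Or.inr ⟨j, by simpa using Finset.mem_range.mp hj, h.symm⟩)
        · exact Or.inr ⟨j, by simpa using Finset.mem_range.mp hj, h.symm⟩
      rcases hx2 with h | h
      · rw [hfi] at h
        simp only [hEdef, Finset.coe_union, mem_union, Finset.coe_insert,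
          Finset.coe_singleton, mem_insert_iff, mem_singleton_iff]
        rcases h.1 with h' | h'
        · exact Or.inl (Or.inl (Or.inl h'))
        · exact Or.inl (Or.inl (Or.inr h'))
      · have := h.2
        rw [frontier_compl] at this
        exact hfU this
    · -- E ⊆ frontier
      intro p hp
      rw [frontier_eq_closure_inter_closure, (isClosed_cthickening).closure_eq]
      simp only [hEdef, Finset.coe_union, Finset.coe_image, Finset.coe_insert,
        Finset.coe_singleton, Finset.coe_range, mem_union, mem_image, mem_insert_iff,
        mem_singleton_iff] at hp
      rcases hp with (hp | hp) | hp
      · rcases hp with hp | hp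
        · -- p = m - r
          subst hp
          constructor
          · rw [hthick]
            refine ⟨⟨le_refl _, by linarith⟩, ?_⟩
            intro hmem2
            obtain ⟨j, _, hj2⟩ := mem_iUnion₂.mp hmem2
            have := (haM j).1
            have := hj2.1
            linarith
          · apply closure_mono (show Iio (m - r) ⊆ (cthickening r F)ᶜ from
              fun y hy hyS => by
                have := (hSsub hyS).1
                exact absurd this (not_le.mpr hy))
            rw [closure_Iio]
            exact Set.mem_Iic.2 le_rfl
        · -- p = M + r
          subst hp
          constructor
          · rw [hthick]
            refine ⟨⟨by linarith, le_refl _⟩, ?_⟩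
            intro hmem2
            obtain ⟨j, _, hj2⟩ := mem_iUnion₂.mp hmem2
            have := (haM j).2
            have h1 := hj2.2
            have := (hab j).1
            linarith
          · apply closure_mono (show Ioi (M + r) ⊆ (cthickening r F)ᶜ from
              fun y hy hyS => by
                have := (hSsub hyS).2
                exact absurd this (not_le.mpr hy))
            rw [closure_Ioi]
            exact Set.mem_Ici.2 le_rfl
      · -- p = a j + r
        obtain ⟨j, hj, hp⟩ := hp
        rw [Set.mem_Iio] at hj
        subst hp
        have hlj := hn2 j hj
        have hablj := (hab j).2
        constructor
        · rw [hthick]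
          refine ⟨⟨by have := (haM j).1; linarith, by
              have := (haM j).2; have := (hab j).1; linarith⟩, ?_⟩
          intro hmem2
          obtain ⟨i, _, hi2⟩ := mem_iUnion₂.mp hmem2
          by_cases hij : i = j
          · subst hij; exact lt_irrefl _ hi2.1
          · have : a j ∈ Ioo (a i) (b i) := ⟨by linarith [hi2.1], by linarith [hi2.2]⟩
            exact hFd i (a j) (hendF j).1 this
        · apply closure_mono (show Ioo (a j + r) (b j - r) ⊆ (cthickening r F)ᶜ from
            fun y hy => hUS (mem_biUnion (Finset.mem_range.mpr hj) hy))
          rw [closure_Ioo (by intro h; linarith)]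
          exact ⟨le_refl _, by linarith⟩
      · -- p = b j - r
        obtain ⟨j, hj, hp⟩ := hp
        rw [Set.mem_Iio] at hj
        subst hp
        have hlj := hn2 j hj
        have hablj := (hab j).2
        constructor
        · rw [hthick]
          refine ⟨⟨by have := (haM j).1; have := (hab j).1; linarith,
              by have := (haM j).2; linarith⟩, ?_⟩
          intro hmem2
          obtain ⟨i, _, hi2⟩ := mem_iUnion₂.mp hmem2
          by_cases hij : i = j
          · subst hij; exact lt_irrefl _ hi2.2
          · have : b j ∈ Ioo (a i) (b i) := ⟨by linarith [hi2.1], by linarith [hi2.2]⟩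
            exact hFd i (b j) (hendF j).2 this
        · apply closure_mono (show Ioo (a j + r) (b j - r) ⊆ (cthickening r F)ᶜ from
            fun y hy => hUS (mem_biUnion (Finset.mem_range.mpr hj) hy))
          rw [closure_Ioo (by intro h; linarith)]
          exact ⟨by linarith, le_refl _⟩
  -- cardinality
  have hd1 : Disjoint ({m - r, M + r} : Finset ℝ)
      ((Finset.range n).image fun j => a j + r) := by
    rw [Finset.disjoint_right]
    intro p hp hp2
    obtain ⟨j, hj, hja⟩ := Finset.mem_image.mp hp
    rw [Finset.mem_insert, Finset.mem_singleton] at hp2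
    rcases hp2 with h | h
    · rw [h] at hja
      have := (haM j).1
      linarith
    · rw [h] at hja
      have := (haM j).2
      have := (hab j).1
      linarith
  have hd2 : Disjoint (({m - r, M + r} : Finset ℝ)
      ∪ (Finset.range n).image (fun j => a j + r))
      ((Finset.range n).image fun j => b j - r) := by
    rw [Finset.disjoint_right]
    intro p hp hp2
    obtain ⟨j, hj, hjb⟩ := Finset.mem_image.mp hp
    rw [Finset.mem_union] at hp2
    rcases hp2 with h | h
    · rw [Finset.mem_insert, Finset.mem_singleton] at h
      rcases h with h | h
      · rw [h] at hjb
        have := (haM j).1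
        have := (hab j).1
        linarith
      · rw [h] at hjb
        have := (haM j).2
        linarith
    · obtain ⟨i, hi, hia⟩ := Finset.mem_image.mp h
      exact habr i j (Finset.mem_range.mp hj) (by rw [hia, hjb])
  have hainj : Function.Injective (fun j => a j + r) := fun i j h =>
    ainj (by simpa using h)
  have hbinj : Function.Injective (fun j => b j - r) := fun i j h =>
    binj (by have : b i - r = b j - r := h; linarith)
  have hcard : E.card = 2 + 2*n := by
    rw [hEdef, Finset.card_union_of_disjoint hd2, Finset.card_union_of_disjoint hd1,
      Finset.card_image_of_injective _ hainj, Finset.card_image_of_injective _ hbinj,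
      Finset.card_range]
    have : ({m - r, M + r} : Finset ℝ).card = 2 := by
      rw [Finset.card_insert_of_notMem (by
        rw [Finset.mem_singleton]; intro h; linarith), Finset.card_singleton]
    rw [this]
    ring
  rw [hfront, hausdorff0_finset, hcard]

lemma count_asymp (l : ℕ → ℝ) (hmono : Antitone l)
    (hpos : ∀ j, 0 < l j) (D L : ℝ) (hD0 : 0 < D) (hL : 0 < L)
    (hstring : Filter.Tendsto (fun j : ℕ => l j * (j : ℝ) ^ (1 / D)) Filter.atTop (𝓝 L))
    (N : ℝ → ℕ) (hN1 : ∀ s, 0 < s → l (N s) ≤ s) (hN2 : ∀ s, 0 < s → ∀ j < N s, s < l j) :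
    Filter.Tendsto (fun s : ℝ => (N s : ℝ) * s ^ D) (𝓝[>] 0) (𝓝 (L ^ D)) := by
  rw [Metric.tendsto_nhdsWithin_nhds]
  intro ε hε
  -- continuity of x ↦ x^D at L
  have hcont : ContinuousAt (fun x : ℝ => x ^ D) L :=
    Real.continuousAt_rpow_const L D (Or.inl hL.ne')
  rw [Metric.continuousAt_iff] at hcont
  obtain ⟨δ₁, hδ₁, hδ₁p⟩ := hcont (ε / 3) (by linarith)
  set ε' : ℝ := min (δ₁ / 2) (L / 2) with hε'def
  have hε'0 : 0 < ε' := lt_min (by linarith) (by linarith)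
  have hε'L : ε' < L := (min_le_right _ _).trans_lt (by linarith)
  have hup : |(L + ε') ^ D - L ^ D| < ε / 3 := by
    have := hδ₁p (x := L + ε') (by
      rw [Real.dist_eq]
      rw [abs_of_nonneg (by linarith)]
      have : ε' ≤ δ₁ / 2 := min_le_left _ _
      linarith)
    rwa [Real.dist_eq] at this
  have hlo : |(L - ε') ^ D - L ^ D| < ε / 3 := by
    have := hδ₁p (x := L - ε') (by
      rw [Real.dist_eq, abs_of_nonpos (by linarith)]
      have : ε' ≤ δ₁ / 2 := min_le_left _ _
      linarith)
    rwa [Real.dist_eq] at this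
  -- N₀ from hstring
  rw [Metric.tendsto_atTop] at hstring
  obtain ⟨N₀', hN₀'⟩ := hstring ε' hε'0
  set N₀ : ℕ := max N₀' 1 with hN₀def
  have hN₀1 : 1 ≤ N₀ := le_max_right _ _
  have hN₀d : ∀ j ≥ N₀, |l j * (j : ℝ) ^ (1 / D) - L| < ε' := fun j hj => by
    have := hN₀' j (le_trans (le_max_left _ _) hj)
    rwa [Real.dist_eq] at this
  -- δ₂ making s^D small
  have h0 : Tendsto (fun s : ℝ => s ^ D) (𝓝[>] (0:ℝ)) (𝓝 0) := by
    have h := (Real.continuousAt_rpow_const 0 D (Or.inr hD0.le)).tendsto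
    rw [Real.zero_rpow hD0.ne'] at h
    exact h.mono_left nhdsWithin_le_nhds
  rw [Metric.tendsto_nhdsWithin_nhds] at h0
  obtain ⟨δ₂, hδ₂, hδ₂p⟩ := h0 (ε / 3) (by linarith)
  refine ⟨min δ₂ (l N₀), lt_min hδ₂ ?_, ?_⟩
  · exact hpos N₀
  intro s hs hsd
  have hs0 : (0:ℝ) < s := hs
  have hsδ₂ : dist s 0 < δ₂ := hsd.trans_le (min_le_left _ _)
  have hsl : s < l N₀ := by
    have := hsd.trans_le (min_le_right _ _)
    rwa [Real.dist_eq, sub_zero, abs_of_pos hs0] at this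
  have hsD : s ^ D < ε / 3 := by
    have := hδ₂p hs hsδ₂
    rwa [Real.dist_eq, sub_zero, abs_of_nonneg (Real.rpow_nonneg hs0.le D)] at this
  have hsDpos : 0 < s ^ D := Real.rpow_pos_of_pos hs0 D
  set n := N s with hndef
  have hngt : N₀ < n := by
    by_contra h
    push_neg at h
    exact absurd (le_trans (hmono h) (hN1 s hs0)) (not_le.mpr hsl)
  -- upper bound
  have hn1 : 1 ≤ n := le_trans hN₀1 hngt.le
  set j := n - 1 with hjdef
  have hjn : n = j + 1 := (Nat.succ_pred_eq_of_pos hn1).symm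
  have hjN₀ : N₀ ≤ j := by omega
  have hj1 : (1:ℝ) ≤ (j:ℝ) := by exact_mod_cast le_trans hN₀1 hjN₀
  have hj0 : (0:ℝ) < (j:ℝ) := lt_of_lt_of_le one_pos hj1
  have hjl : s < l j := hN2 s hs0 j (by omega)
  have hjd := hN₀d j hjN₀
  have hjup : l j * (j:ℝ) ^ (1/D) < L + ε' := by
    have := (abs_lt.mp hjd).2; linarith
  have hjrp : (0:ℝ) < (j:ℝ) ^ (1/D) := Real.rpow_pos_of_pos hj0 _
  have h1 : s * (j:ℝ) ^ (1/D) < L + ε' :=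
    lt_trans (mul_lt_mul_of_pos_right hjl hjrp) hjup
  have h2 : (j:ℝ) ^ (1/D) < (L + ε') / s := by
    rw [lt_div_iff₀ hs0]; linarith [mul_comm s ((j:ℝ) ^ (1/D))]
  have h3 : (j:ℝ) < ((L + ε') / s) ^ D := by
    have := Real.rpow_lt_rpow hjrp.le h2 hD0
    rwa [← Real.rpow_mul (Nat.cast_nonneg j), one_div,
      inv_mul_cancel₀ hD0.ne', Real.rpow_one] at this
  have hkey_up : (n:ℝ) * s ^ D < L ^ D + ε := by
    have hdivmul : ((L + ε') / s) ^ D * s ^ D = (L + ε') ^ D := by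
      rw [← Real.mul_rpow (by positivity) hs0.le, div_mul_cancel₀ _ hs0.ne']
    have hncast : (n:ℝ) = (j:ℝ) + 1 := by rw [hjn]; push_cast; ring
    have : (n:ℝ) * s ^ D < (((L + ε') / s) ^ D + 1) * s ^ D := by
      rw [hncast]
      exact mul_lt_mul_of_pos_right (by linarith) hsDpos
    rw [add_mul, one_mul, hdivmul] at this
    have := (abs_lt.mp hup).2
    linarith
  -- lower bound
  have hnd := hN₀d n hngt.le
  have hnlo : L - ε' < l n * (n:ℝ) ^ (1/D) := by
    have := (abs_lt.mp hnd).1; linarith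
  have hn0 : (0:ℝ) < (n:ℝ) := by exact_mod_cast lt_of_lt_of_le Nat.zero_lt_one hn1
  have hnrp : (0:ℝ) < (n:ℝ) ^ (1/D) := Real.rpow_pos_of_pos hn0 _
  have h4 : L - ε' < s * (n:ℝ) ^ (1/D) := by
    have hln := hN1 s hs0
    have := mul_le_mul_of_nonneg_right hln hnrp.le
    linarith
  have h5 : (L - ε') / s < (n:ℝ) ^ (1/D) := by
    rw [div_lt_iff₀ hs0]; linarith [mul_comm s ((n:ℝ) ^ (1/D))]
  have h6 : ((L - ε') / s) ^ D < (n:ℝ) := by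
    have := Real.rpow_lt_rpow (div_nonneg (by linarith) hs0.le) h5 hD0
    rwa [← Real.rpow_mul (Nat.cast_nonneg n), one_div,
      inv_mul_cancel₀ hD0.ne', Real.rpow_one] at this
  have hkey_lo : L ^ D - ε < (n:ℝ) * s ^ D := by
    have hdivmul : ((L - ε') / s) ^ D * s ^ D = (L - ε') ^ D := by
      rw [← Real.mul_rpow (div_nonneg (by linarith) hs0.le) hs0.le,
        div_mul_cancel₀ _ hs0.ne']
    have : ((L - ε') / s) ^ D * s ^ D < (n:ℝ) * s ^ D :=
      mul_lt_mul_of_pos_right h6 hsDpos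
    rw [hdivmul] at this
    have := (abs_lt.mp hlo).1
    linarith
  rw [Real.dist_eq, abs_lt]
  constructor <;> linarith

theorem scontent_eq_of_string_asymptotics (F : Set ℝ) (hF : IsCompact F)
    (hF0 : volume F = 0) (l : ℕ → ℝ) (hl : IsFractalString F l)
    (D : ℝ) (hD : D ∈ Set.Ioo (0 : ℝ) 1) (L : ℝ) (hL : 0 < L)
    (hstring : Filter.Tendsto (fun j : ℕ => l j * (j : ℝ) ^ (1 / D)) Filter.atTop (𝓝 L)) :
    Filter.Tendsto
      (fun r : ℝ => μH[(0 : ℝ)] (frontier (cthickening r F)) /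
        ENNReal.ofReal ((1 - D) * kappa (1 - D) * r ^ (-D)))
      (𝓝[>] (0 : ℝ))
      (𝓝 (ENNReal.ofReal ((2 : ℝ) ^ (1 - D) * L ^ D / (kappa (1 - D) * (1 - D))))) := by
  classical
  obtain ⟨hD0, hD1⟩ := hD
  obtain ⟨hmono, hpos, a, b, hdisj, hab, hgap⟩ := hl
  -- l tends to 0
  have hl0 : Tendsto l atTop (𝓝 0) := by
    have h1 : Tendsto (fun j : ℕ => ((j:ℝ)) ^ (-(1/D))) atTop (𝓝 0) :=
      (tendsto_rpow_neg_atTop (by positivity)).comp tendsto_natCast_atTop_atTop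
    have h2 := hstring.mul h1
    rw [mul_zero] at h2
    apply h2.congr'
    filter_upwards [eventually_ge_atTop 1] with j hj
    have hj0 : (0:ℝ) < j := by exact_mod_cast hj
    rw [mul_assoc, ← Real.rpow_add hj0, add_neg_cancel, Real.rpow_zero, mul_one]
  have hex : ∀ s : ℝ, 0 < s → ∃ j, l j ≤ s := fun s hs =>
    ((hl0.eventually (ge_mem_nhds hs)).exists).imp (fun j h => h)
  set N : ℝ → ℕ := fun s => if h : ∃ j, l j ≤ s then Nat.find h else 0 with hN
  have hN1 : ∀ s, 0 < s → l (N s) ≤ s := by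
    intro s hs
    simp only [hN, dif_pos (hex s hs)]
    exact Nat.find_spec (hex s hs)
  have hN2 : ∀ s, 0 < s → ∀ j, j < N s → s < l j := by
    intro s hs j hj
    simp only [hN, dif_pos (hex s hs)] at hj
    exact lt_of_not_ge (Nat.find_min (hex s hs) hj)
  have hK : 0 < kappa (1 - D) := by
    rw [kappa]
    exact div_pos (Real.rpow_pos_of_pos Real.pi_pos _)
      (Real.Gamma_pos_of_pos (by linarith))
  have hμ : ∀ r : ℝ, 0 < r →
      μH[(0:ℝ)] (frontier (cthickening r F)) = ((2 + 2*(N (2*r)) : ℕ) : ℝ≥0∞) := by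
    intro r hr
    exact frontier_thickening_eq F hF l a b hmono hpos hdisj hab hgap r hr (N (2*r))
      (hN1 (2*r) (by linarith)) (fun j hj => hN2 (2*r) (by linarith) j hj)
  have hNs := count_asymp l hmono hpos D L hD0 hL hstring N hN1 hN2
  have h2r : Tendsto (fun r : ℝ => 2*r) (𝓝[>] (0:ℝ)) (𝓝[>] (0:ℝ)) := by
    rw [tendsto_nhdsWithin_iff]
    constructor
    · have h : Tendsto (fun r:ℝ => 2*r) (𝓝 0) (𝓝 (2*0)) :=
        (continuous_const.mul continuous_id).tendsto 0
      rw [mul_zero] at h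
      exact h.mono_left nhdsWithin_le_nhds
    · filter_upwards [self_mem_nhdsWithin] with r hr
      exact mul_pos two_pos (show (0:ℝ) < r from hr)
  have hcomp : Tendsto (fun r : ℝ => (N (2*r) : ℝ) * (2*r) ^ D) (𝓝[>] (0:ℝ))
      (𝓝 (L ^ D)) := hNs.comp h2r
  have h2D : (0:ℝ) < 2 ^ D := Real.rpow_pos_of_pos two_pos D
  have h4 : Tendsto (fun r : ℝ => (N (2*r) : ℝ) * r ^ D) (𝓝[>] (0:ℝ))
      (𝓝 (L ^ D * 2 ^ (-D))) := by
    have h3 := hcomp.mul_const ((2:ℝ) ^ (-D))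
    apply h3.congr'
    filter_upwards [self_mem_nhdsWithin] with r hr
    have hr0 : (0:ℝ) < r := hr
    rw [Real.mul_rpow two_pos.le hr0.le, Real.rpow_neg two_pos.le]
    field_simp
  have hr0D : Tendsto (fun r : ℝ => r ^ D) (𝓝[>] (0:ℝ)) (𝓝 0) := by
    have h := (Real.continuousAt_rpow_const 0 D (Or.inr hD0.le)).tendsto
    rw [Real.zero_rpow hD0.ne'] at h
    exact h.mono_left nhdsWithin_le_nhds
  set K := (1 - D) * kappa (1 - D) with hKdef
  have hKpos : 0 < K := mul_pos (by linarith) hK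
  have hg : Tendsto (fun r : ℝ => (2*(r^D) + 2*((N (2*r):ℝ) * r^D)) / K) (𝓝[>] (0:ℝ))
      (𝓝 ((2*(0:ℝ) + 2*(L^D * 2^(-D)))/K)) :=
    ((hr0D.const_mul 2).add (h4.const_mul 2)).div_const K
  have hval : (2*(0:ℝ) + 2*(L^D * 2^(-D)))/K
      = (2:ℝ)^(1-D) * L^D / (kappa (1-D) * (1-D)) := by
    have h1 : (1:ℝ) - D ≠ 0 := by linarith
    have h2 : kappa (1-D) ≠ 0 := hK.ne'
    rw [Real.rpow_sub two_pos, Real.rpow_one, Real.rpow_neg two_pos.le, hKdef]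
    rw [div_eq_div_iff (by positivity) (by
      have : 0 < kappa (1-D) * (1-D) := mul_pos hK (by linarith)
      positivity)]
    field_simp
    ring
  rw [hval] at hg
  have hfin := (ENNReal.continuous_ofReal.tendsto _).comp hg
  apply hfin.congr'
  filter_upwards [self_mem_nhdsWithin] with r hr
  have hr0 : (0:ℝ) < r := hr
  have hrD : (0:ℝ) < r ^ (-D) := Real.rpow_pos_of_pos hr0 _
  have hrD' : (0:ℝ) < r ^ D := Real.rpow_pos_of_pos hr0 _
  have hden : 0 < (1-D) * kappa (1-D) * r^(-D) := mul_pos hKpos hrD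
  have hreal : (2*(r^D) + 2*((N (2*r):ℝ) * r^D)) / K
      = ((2 + 2*(N (2*r)) : ℕ) : ℝ) / ((1-D) * kappa (1-D) * r^(-D)) := by
    rw [Real.rpow_neg hr0.le, hKdef]
    push_cast
    field_simp
  simp only [Function.comp]
  rw [hμ r hr0, hreal, ENNReal.ofReal_div_of_pos hden, ENNReal.ofReal_natCast]
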